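/- Consider the discrete-time linear system x[k+1] = A x[k] + B u[k]. Suppose there exists a function V : ℕ → ℝ with V(k) ≥ 0 for all k and V(k+1) ≤ V(k) − x[k]ᵀ Q x[k] − u[k]ᵀ R u[k] for all k, where Q = CᵀC for a real p×n matrix C, R is a symmetric positive definite m×m matrix, and the pair (A, C) is observable in the sense that the linear map x ↦ (Cx, CAx, …, CA^{n−1}x) from ℝⁿ to ℝ^{np} is injective. Then the state sequence converges to zero: x[k] → 0 as k → ∞. -/

import Mathlib

open Matrix Filter

private lemma tendsto_of_comp_linear {a : ℕ} {ι : Type} [Fintype ι]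
    (L : (Fin a → ℝ) →ₗ[ℝ] (ι → ℝ)) (hL : Function.Injective L)
    {y : ℕ → Fin a → ℝ} (h : Tendsto (fun k => L (y k)) atTop (nhds 0)) :
    Tendsto y atTop (nhds 0) := by
  obtain ⟨g, hg⟩ := L.exists_leftInverse_of_injective (LinearMap.ker_eq_bot.mpr hL)
  have hgc : Continuous g := g.continuous_of_finiteDimensional
  have h2 : Tendsto (fun k => g (L (y k))) atTop (nhds (g 0)) := (hgc.tendsto 0).comp h
  have hy : ∀ v, g (L v) = v := fun v => LinearMap.congr_fun hg v
  simpa [hy, map_zero] using h2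

private lemma tendsto_of_dotProduct_self {a : ℕ} {w : ℕ → Fin a → ℝ}
    (h : Tendsto (fun k => w k ⬝ᵥ w k) atTop (nhds 0)) :
    Tendsto w atTop (nhds 0) := by
  rw [tendsto_pi_nhds]
  intro j
  have hle : ∀ k, w k j * w k j ≤ w k ⬝ᵥ w k := fun k =>
    Finset.single_le_sum (f := fun i => w k i * w k i)
      (fun i _ => mul_self_nonneg _) (Finset.mem_univ j)
  have hsq : Tendsto (fun k => w k j * w k j) atTop (nhds 0) :=
    squeeze_zero (fun k => mul_self_nonneg _) hle h
  have habs : Tendsto (fun k => |w k j|) atTop (nhds 0) := by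
    have := (Real.continuous_sqrt.tendsto 0).comp hsq
    simpa [Function.comp_def, ← Real.sqrt_mul_self_eq_abs] using this
  rw [show (0 : Fin a → ℝ) j = 0 from rfl]
  exact (tendsto_zero_iff_abs_tendsto_zero _).mpr habs

theorem mpc_stability
    {n m p : ℕ}
    (A : Matrix (Fin n) (Fin n) ℝ) (B : Matrix (Fin n) (Fin m) ℝ)
    (C : Matrix (Fin p) (Fin n) ℝ) (Q : Matrix (Fin n) (Fin n) ℝ)
    (R : Matrix (Fin m) (Fin m) ℝ)
    (hQ : Q = Cᵀ * C)
    (hR : R.PosDef)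
    (hobs : Function.Injective
      (fun v : Fin n → ℝ => fun ij : Fin n × Fin p =>
        (C * A ^ (ij.1 : ℕ)).mulVec v ij.2))
    (x : ℕ → Fin n → ℝ) (u : ℕ → Fin m → ℝ)
    (hdyn : ∀ k, x (k + 1) = A.mulVec (x k) + B.mulVec (u k))
    (V : ℕ → ℝ)
    (hV_nonneg : ∀ k, 0 ≤ V k)
    (hV_dec : ∀ k, V (k + 1) ≤ V k - x k ⬝ᵥ Q.mulVec (x k) - u k ⬝ᵥ R.mulVec (u k)) :
    Tendsto x atTop (nhds 0) := by
  set s : ℕ → ℝ := fun k => x k ⬝ᵥ Q.mulVec (x k) with hs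
  set t : ℕ → ℝ := fun k => u k ⬝ᵥ R.mulVec (u k) with ht
  have hs_eq : ∀ k, s k = C.mulVec (x k) ⬝ᵥ C.mulVec (x k) := by
    intro k
    show x k ⬝ᵥ Q *ᵥ x k = _
    rw [hQ, ← Matrix.mulVec_mulVec, Matrix.dotProduct_mulVec, Matrix.vecMul_transpose]
  have hs_nonneg : ∀ k, 0 ≤ s k := fun k => by
    rw [hs_eq k]; exact Finset.sum_nonneg fun i _ => mul_self_nonneg _
  have ht_nonneg : ∀ k, 0 ≤ t k := fun k => by
    simpa using hR.posSemidef.dotProduct_mulVec_nonneg (u k)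
  -- V converges, so the stage costs tend to 0
  have hanti : Antitone V := by
    apply antitone_nat_of_succ_le
    intro k
    have := hV_dec k
    have := hs_nonneg k
    have := ht_nonneg k
    linarith
  have hVlim : Tendsto V atTop (nhds (⨅ i, V i)) :=
    tendsto_atTop_ciInf hanti ⟨0, fun y hy => by obtain ⟨i, rfl⟩ := hy; exact hV_nonneg i⟩
  have hD : Tendsto (fun k => V k - V (k + 1)) atTop (nhds 0) := by
    have := hVlim.sub (hVlim.comp (tendsto_add_atTop_nat 1))
    simpa using this
  have hst : ∀ k, s k + t k ≤ V k - V (k + 1) := fun k => by have := hV_dec k; linarith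
  have hs0 : Tendsto s atTop (nhds 0) :=
    squeeze_zero hs_nonneg (fun k => by have := hst k; have := ht_nonneg k; linarith) hD
  have ht0 : Tendsto t atTop (nhds 0) :=
    squeeze_zero ht_nonneg (fun k => by have := hst k; have := hs_nonneg k; linarith) hD
  -- u → 0
  have hu : Tendsto u atTop (nhds 0) := by
    set S : Matrix (Fin m) (Fin m) ℝ := (open scoped MatrixOrder in CFC.sqrt R) with hSdef
    have hSS : S * S = R := open scoped MatrixOrder in CFC.sqrt_mul_sqrt_self R hR.posSemidef.nonneg
    have hherm : Sᴴ = S := open scoped MatrixOrder in (CFC.sqrt_nonneg R).posSemidef.1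
    have hSsym : Sᵀ = S := by
      ext i j
      have := congrFun (congrFun hherm i) j
      simpa [Matrix.conjTranspose_apply] using this
    have hdetS : S.det ≠ 0 := by
      have hdet : S.det * S.det = R.det := by rw [← Matrix.det_mul, hSS]
      intro h0
      have := hR.det_pos
      rw [← hdet, h0, zero_mul] at this
      exact lt_irrefl _ this
    have hSinj : Function.Injective S.mulVec :=
      Matrix.mulVec_injective_iff_isUnit.mpr
        ((Matrix.isUnit_iff_isUnit_det S).mpr (isUnit_iff_ne_zero.mpr hdetS))
    have ht_eq : ∀ k, t k = S.mulVec (u k) ⬝ᵥ S.mulVec (u k) := by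
      intro k
      show u k ⬝ᵥ R *ᵥ u k = _
      rw [← hSS, ← Matrix.mulVec_mulVec, Matrix.dotProduct_mulVec]
      congr 1
      conv_lhs => rw [← hSsym]
      rw [Matrix.vecMul_transpose]
    have hSu : Tendsto (fun k => S.mulVec (u k)) atTop (nhds 0) := by
      apply tendsto_of_dotProduct_self
      convert ht0 using 2 with k
      exact (ht_eq k).symm
    exact tendsto_of_comp_linear S.mulVecLin hSinj (by simpa using hSu)
  -- C A^i x → 0 for all i
  have hCx : Tendsto (fun k => C.mulVec (x k)) atTop (nhds 0) := by
    apply tendsto_of_dotProduct_self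
    convert hs0 using 2 with k
    exact (hs_eq k).symm
  have hPow : ∀ i : ℕ, Tendsto (fun k => (C * A ^ i).mulVec (x k)) atTop (nhds 0) := by
    intro i
    induction i with
    | zero => simpa using hCx
    | succ i ih =>
      have h1 : Tendsto (fun k => (C * A ^ i).mulVec (x (k + 1))) atTop (nhds 0) :=
        ih.comp (tendsto_add_atTop_nat 1)
      have h2 : Tendsto (fun k => ((C * A ^ i) * B).mulVec (u k)) atTop (nhds 0) := by
        have := ((((C * A ^ i) * B).mulVecLin).continuous_of_finiteDimensional.tendsto 0).comp hu
        simpa only [Function.comp_def, Matrix.mulVecLin_apply, map_zero] using this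
      have key : (fun k => (C * A ^ (i + 1)).mulVec (x k)) =
          fun k => (C * A ^ i).mulVec (x (k + 1)) - ((C * A ^ i) * B).mulVec (u k) := by
        funext k
        rw [pow_succ, ← Matrix.mul_assoc, ← Matrix.mulVec_mulVec, hdyn k]
        simp [Matrix.mulVec_add, Matrix.mulVec_mulVec]
      rw [key]
      simpa using h1.sub h2
  -- conclude via observability
  set Φ : (Fin n → ℝ) →ₗ[ℝ] (Fin n × Fin p → ℝ) :=
    { toFun := fun v ij => (C * A ^ (ij.1 : ℕ)).mulVec v ij.2
      map_add' := fun v w => by funext ij; simp [Matrix.mulVec_add]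
      map_smul' := fun c v => by funext ij; simp [Matrix.mulVec_smul] } with hΦ
  have hΦinj : Function.Injective Φ := hobs
  have hΦ0 : Tendsto (fun k => Φ (x k)) atTop (nhds 0) := by
    rw [tendsto_pi_nhds]
    intro ij
    have := tendsto_pi_nhds.mp (hPow ij.1) ij.2
    exact this
  exact tendsto_of_comp_linear Φ hΦinj hΦ0
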